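/- Let X be a set, f : X → X, and y ∈ X such that the forward orbit {fⁿ(y) : n ≥ 0} is contained in T_∞(f,x) for some x. Then the forward orbit of y under f is a finite set. -/
import Mathlib


/-- Let `X` be a set, `f : X → X`, and `y ∈ X` such that the forward orbit
`{fⁿ(y) : n ≥ 0}` is contained in `T_∞(f,x) = ⋃ₙ f⁻ⁿ(x)` for some `x`. Then the forward
orbit of `y` under `f` is a finite set. -/
theorem stmt_3 {X : Type*} (f : X → X) (x y : X)
    (h : {w : X | ∃ n : ℕ, f^[n] y = w} ⊆ {z : X | ∃ n : ℕ, f^[n] z = x}) :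
    {w : X | ∃ n : ℕ, f^[n] y = w}.Finite := by
  -- x is an iterate of y
  obtain ⟨m, hm⟩ := h ⟨0, rfl⟩
  simp only [Function.iterate_zero_apply] at hm
  -- x is periodic with positive period
  obtain ⟨k, hk⟩ := h ⟨m + 1, rfl⟩
  have hx : f^[k + 1] x = x := by
    have : f^[m + 1] y = f x := by
      rw [Function.iterate_succ_apply', hm]
    rw [this] at hk
    rw [Function.iterate_succ_apply, hk]
  have hper : Function.IsPeriodicPt f (k + 1) x := hx
  -- every orbit point is f^[i] y for some i < m + k + 1
  apply Set.Finite.subset ((Set.finite_Iio (m + (k + 1))).image (fun i => f^[i] y))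
  rintro w ⟨n, rfl⟩
  by_cases hn : n < m + (k + 1)
  · exact ⟨n, hn, rfl⟩
  · push_neg at hn
    refine ⟨m + (n - m) % (k + 1), ?_, ?_⟩
    · have : (n - m) % (k + 1) < k + 1 := Nat.mod_lt _ (Nat.succ_pos k)
      simp only [Set.mem_Iio]; omega
    · have h1 : f^[(n - m) % (k + 1)] x = f^[n - m] x := hper.iterate_mod_apply _
      calc f^[m + (n - m) % (k + 1)] y
          = f^[(n - m) % (k + 1)] (f^[m] y) := by rw [Nat.add_comm, Function.iterate_add_apply]
        _ = f^[n - m] x := by rw [hm, h1]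
        _ = f^[n - m] (f^[m] y) := by rw [hm]
        _ = f^[n] y := by rw [← Function.iterate_add_apply]; congr 1; omega
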